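/- Let (e₁,…,e_k) be a basis of a finite-dimensional normed space E such that for every choice of signs ε ∈ {−1,1}^k the linear map V_ε sending e_i ↦ ε_i e_i is a contraction. Define the diagonal projection Δ on E ⊗ E (with a cross norm for which V_ε ⊗ V_ε is a contraction for all ε) by Δ(e_i ⊗ e_j) = 0 for i ≠ j and Δ(e_i ⊗ e_i) = e_i ⊗ e_i. Then Δ equals the average over ε ∈ {−1,1}^k of V_ε ⊗ V_ε, and hence Δ is a contraction. -/

import Mathlib

open scoped BigOperators TensorProduct

private lemma seminorm_sum_le' {ι M : Type*} [AddCommGroup M] [Module ℂ M]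
    (ν : Seminorm ℂ M) (s : Finset ι) (f : ι → M) :
    ν (∑ i ∈ s, f i) ≤ ∑ i ∈ s, ν (f i) := by
  induction s using Finset.cons_induction with
  | empty => simp
  | cons a s ha ih =>
    rw [Finset.sum_cons, Finset.sum_cons]
    exact le_trans (map_add_le_add ν _ _) (by gcongr)

private lemma sign_sum_ne {k : ℕ} {i j : Fin k} (h : i ≠ j) :
    ∑ ε : Fin k → Bool, (if ε i then (1:ℂ) else -1) * (if ε j then 1 else -1) = 0 := by
  apply Finset.sum_ninvolution (fun ε => Function.update ε i (!ε i))
  · intro ε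
    simp only [Function.update_apply, if_neg h.symm]
    cases hb : ε i <;> cases hc : ε j <;> simp [hb, hc]
  · intro ε _ hEq
    have := congrFun hEq i
    simp at this
  · intro ε; simp
  · intro ε
    funext x
    by_cases hx : x = i
    · subst hx; simp
    · simp [Function.update_apply, hx]

private lemma sign_sum_eq {k : ℕ} (i : Fin k) :
    ∑ ε : Fin k → Bool, (if ε i then (1:ℂ) else -1) * (if ε i then 1 else -1) = 2 ^ k := by
  have : ∀ ε : Fin k → Bool, (if ε i then (1:ℂ) else -1) * (if ε i then 1 else -1) = 1 := by
    intro ε; cases hb : ε i <;> simp [hb]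
  simp only [this, Finset.sum_const, Finset.card_univ, Fintype.card_fun, Fintype.card_bool,
    Fintype.card_fin, nsmul_eq_mul, mul_one]
  push_cast; ring

theorem diagonal_projection_eq_average_and_contractive
    {E : Type*} [NormedAddCommGroup E] [NormedSpace ℂ E] {k : ℕ}
    (e : Module.Basis (Fin k) ℂ E)
    (V : (Fin k → Bool) → E →ₗ[ℂ] E)
    (hV : ∀ ε, V ε = e.constr ℂ fun i => (if ε i then (1 : ℂ) else -1) • e i)
    (hVcontr : ∀ ε (x : E), ‖V ε x‖ ≤ ‖x‖)
    (ν : Seminorm ℂ (E ⊗[ℂ] E))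
    (hν : ∀ ε (x : E ⊗[ℂ] E), ν (TensorProduct.map (V ε) (V ε) x) ≤ ν x)
    (Δ : E ⊗[ℂ] E →ₗ[ℂ] E ⊗[ℂ] E)
    (hΔ : Δ = (e.tensorProduct e).constr ℂ fun ij =>
      if ij.1 = ij.2 then e ij.1 ⊗ₜ[ℂ] e ij.2 else 0) :
    (Δ = ((2 : ℂ) ^ k)⁻¹ • ∑ ε : Fin k → Bool, TensorProduct.map (V ε) (V ε)) ∧
      (∀ x : E ⊗[ℂ] E, ν (Δ x) ≤ ν x) := by
  have hVe : ∀ ε (i : Fin k), V ε (e i) = (if ε i then (1 : ℂ) else -1) • e i := by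
    intro ε i; rw [hV]; exact e.constr_basis ℂ _ i
  have key : Δ = ((2 : ℂ) ^ k)⁻¹ • ∑ ε : Fin k → Bool, TensorProduct.map (V ε) (V ε) := by
    apply (e.tensorProduct e).ext
    rintro ⟨i, j⟩
    rw [hΔ, Module.Basis.constr_basis]
    simp only [LinearMap.smul_apply, LinearMap.sum_apply, Module.Basis.tensorProduct_apply,
      TensorProduct.map_tmul]
    have hterm : ∀ ε : Fin k → Bool,
        V ε (e i) ⊗ₜ[ℂ] V ε (e j)
          = ((if ε i then (1:ℂ) else -1) * (if ε j then 1 else -1)) • (e i ⊗ₜ[ℂ] e j) := by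
      intro ε
      rw [hVe, hVe, TensorProduct.smul_tmul_smul]
    simp only [hterm, ← Finset.sum_smul]
    by_cases hij : i = j
    · subst hij
      rw [sign_sum_eq, if_pos rfl, smul_smul, inv_mul_cancel₀ (pow_ne_zero _ two_ne_zero), one_smul]
    · rw [sign_sum_ne hij, if_neg hij, zero_smul, smul_zero]
  refine ⟨key, fun x => ?_⟩
  rw [key]
  simp only [LinearMap.smul_apply, LinearMap.sum_apply]
  calc ν (((2:ℂ)^k)⁻¹ • ∑ ε : Fin k → Bool, TensorProduct.map (V ε) (V ε) x)
      = ‖((2:ℂ)^k)⁻¹‖ * ν (∑ ε : Fin k → Bool, TensorProduct.map (V ε) (V ε) x) := by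
        rw [map_smul_eq_mul]
    _ ≤ ‖((2:ℂ)^k)⁻¹‖ * ∑ ε : Fin k → Bool, ν (TensorProduct.map (V ε) (V ε) x) := by
        gcongr
        exact seminorm_sum_le' ν _ _
    _ ≤ ‖((2:ℂ)^k)⁻¹‖ * ∑ _ε : Fin k → Bool, ν x := by
        gcongr with ε _
        exact hν ε x
    _ = ν x := by
        simp only [Finset.sum_const, Finset.card_univ, Fintype.card_fun, Fintype.card_bool,
          Fintype.card_fin, nsmul_eq_mul]
        rw [norm_inv, norm_pow, Complex.norm_ofNat]
        push_cast
        field_simp
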